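/- For every integer k ≥ 3, the minimum cardinality of a multicut for the instance (G_k, H_k) (all supply edge capacities equal to 1, so capacity equals cardinality) is exactly k−1. -/

import Mathlib

open scoped Classical

/-- `H` is a minor of `G`: there are disjoint nonempty connected branch sets in `G`,
one for each vertex of `H`, with an edge of `G` between the branch sets of any two
vertices adjacent in `H`. -/
def SimpleGraph.HasMinor {V : Type*} {W : Type*} (G : SimpleGraph V) (H : SimpleGraph W) : Prop :=
  ∃ φ : W → Set V,
    (∀ w, (φ w).Nonempty) ∧
    (∀ w, (G.induce (φ w)).Connected) ∧
    (∀ w₁ w₂, w₁ ≠ w₂ → Disjoint (φ w₁) (φ w₂)) ∧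
    (∀ w₁ w₂, H.Adj w₁ w₂ → ∃ v₁ ∈ φ w₁, ∃ v₂ ∈ φ w₂, G.Adj v₁ v₂)

/-- Planarity, via Wagner's characterisation: a graph is planar iff it has
neither a `K₅` nor a `K₃,₃` minor. -/
def SimpleGraph.IsPlanar {V : Type*} (G : SimpleGraph V) : Prop :=
  ¬ G.HasMinor (⊤ : SimpleGraph (Fin 5)) ∧
    ¬ G.HasMinor (completeBipartiteGraph (Fin 3) (Fin 3))

/-- A flow path for the instance `(G, H)`: a path in the supply graph `G` joining the
two endpoints of a demand edge of `H`. -/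
structure FlowPath {V : Type*} (G H : SimpleGraph V) where
  src : V
  dst : V
  demand : H.Adj src dst
  walk : G.Walk src dst
  isPath : walk.IsPath

/-- The set of (supply) edges used by a flow path. -/
def FlowPath.edges {V : Type*} {G H : SimpleGraph V} (P : FlowPath G H) : Set (Sym2 V) :=
  {e | e ∈ P.walk.edges}

/-- The demand edge of a flow path. -/
def FlowPath.demandEdge {V : Type*} {G H : SimpleGraph V} (P : FlowPath G H) : Sym2 V :=
  s(P.src, P.dst)

/-- A multiflow `f` is feasible for capacities `c` if it is nonnegative and the total
flow through any supply edge is at most its capacity. -/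
def MultiflowFeasible {V : Type*} (G H : SimpleGraph V) (c : Sym2 V → ℝ)
    (f : FlowPath G H → ℝ) : Prop :=
  (∀ P, 0 ≤ f P) ∧
    ∀ e ∈ G.edgeSet, (∑ᶠ P ∈ {P : FlowPath G H | e ∈ P.edges}, f P) ≤ c e

/-- The value of a multiflow: the total flow on all paths. -/
noncomputable def multiflowValue {V : Type*} {G H : SimpleGraph V}
    (f : FlowPath G H → ℝ) : ℝ :=
  ∑ᶠ P : FlowPath G H, f P

/-- An integer multiflow. -/
def IsIntegerFlow {V : Type*} {G H : SimpleGraph V} (f : FlowPath G H → ℝ) : Prop :=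
  ∀ P, ∃ n : ℤ, f P = n

/-- A half-integer multiflow: every value is an integer multiple of `1/2`. -/
def IsHalfIntegerFlow {V : Type*} {G H : SimpleGraph V} (f : FlowPath G H → ℝ) : Prop :=
  ∀ P, ∃ n : ℤ, f P = n / 2

/-- A multicut: a set of supply edges meeting every path of `𝒫`. -/
def IsMulticut {V : Type*} (G H : SimpleGraph V) (M : Set (Sym2 V)) : Prop :=
  M ⊆ G.edgeSet ∧ ∀ P : FlowPath G H, ∃ e ∈ M, e ∈ P.edges

/-- The capacity of a set of edges. -/
noncomputable def edgeSetCapacity {V : Type*} (c : Sym2 V → ℝ) (M : Set (Sym2 V)) : ℝ :=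
  ∑ᶠ e ∈ M, c e

/-- The set of edges of `E` having exactly one endpoint in `S`. -/
def cutEdges {V : Type*} (E : Set (Sym2 V)) (S : Set V) : Set (Sym2 V) :=
  {e | e ∈ E ∧ ∃ u v, e = s(u, v) ∧ ((u ∈ S ∧ v ∉ S) ∨ (v ∈ S ∧ u ∉ S))}

/-- `S` is the edge set of a circuit of `D` (a connected subgraph with all degrees two). -/
def IsCircuitEdgeSet {W : Type*} (D : SimpleGraph W) (S : Set (Sym2 W)) : Prop :=
  ∃ (w : W) (C : D.Walk w w), C.IsCycle ∧ S = {e | e ∈ C.edges}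

/-- `C` is a cut of the graph `G`. -/
def IsGraphCut {V : Type*} (G : SimpleGraph V) (C : Set (Sym2 V)) : Prop :=
  ∃ S : Set V, C = cutEdges G.edgeSet S

/-- `C` is an inclusionwise minimal nonempty cut of `G`. -/
def IsMinimalCut {V : Type*} (G : SimpleGraph V) (C : Set (Sym2 V)) : Prop :=
  C.Nonempty ∧ IsGraphCut G C ∧
    ∀ C', C'.Nonempty → IsGraphCut G C' → C' ⊆ C → C' = C

/-- `Q` is a 2-connector for the demand edges `F'` within the supply edges `E'`:
every demand edge lies on a circuit of `Q ∪ F'`. -/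
def Is2Connector {W : Type*} (E' F' Q : Set (Sym2 W)) : Prop :=
  Q ⊆ E' ∧ ∀ e ∈ F',
    ∃ S, IsCircuitEdgeSet (SimpleGraph.fromEdgeSet (Q ∪ F')) S ∧ e ∈ S

/-- `D` together with the edge correspondence `star` is a planar dual of `G'`
(Whitney's characterisation): `star` is a bijection between the edges of `G'` and
those of `D` under which inclusionwise minimal cuts correspond to circuits and
circuits correspond to inclusionwise minimal cuts. -/
def IsPlanarDual {V W : Type*} (G' : SimpleGraph V) (D : SimpleGraph W)
    (star : Sym2 V → Sym2 W) : Prop :=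
  Set.InjOn star G'.edgeSet ∧ star '' G'.edgeSet = D.edgeSet ∧
    (∀ C ⊆ G'.edgeSet, (IsMinimalCut G' C ↔ IsCircuitEdgeSet D (star '' C))) ∧
    (∀ C ⊆ G'.edgeSet, (IsCircuitEdgeSet G' C ↔ IsMinimalCut D (star '' C)))

/-- A laminar family: any two members are disjoint or one contains the other. -/
def IsLaminar {α : Type*} (𝓛 : Set (Set α)) : Prop :=
  ∀ A ∈ 𝓛, ∀ B ∈ 𝓛, A ⊆ B ∨ B ⊆ A ∨ Disjoint A B

/-- The supply graph `G_k`: vertices `a_i = Sum.inl i`, `b_i = Sum.inr i` (`i : Fin k`,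
0-indexed), with edges `a_i b_i` and `a_i a_{i+1}`, all of capacity `1`. -/
def Gk (k : ℕ) : SimpleGraph (Fin k ⊕ Fin k) :=
  SimpleGraph.fromEdgeSet
    ({e | ∃ i : Fin k, e = s(Sum.inl i, Sum.inr i)} ∪
      {e | ∃ i j : Fin k, (j : ℕ) = (i : ℕ) + 1 ∧ e = s(Sum.inl i, Sum.inl j)})

/-- The demand graph `H_k`: edges `b_i b_{i+1}` and `b_i a_{i+2}`. -/
def Hk (k : ℕ) : SimpleGraph (Fin k ⊕ Fin k) :=
  SimpleGraph.fromEdgeSet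
    ({e | ∃ i j : Fin k, (j : ℕ) = (i : ℕ) + 1 ∧ e = s(Sum.inr i, Sum.inr j)} ∪
      {e | ∃ i j : Fin k, (j : ℕ) = (i : ℕ) + 2 ∧ e = s(Sum.inr i, Sum.inl j)})


section MulticutAux

open SimpleGraph
open Fin.NatCast

variable (k : ℕ) [NeZero k]

private def Av (n : ℕ) : Fin k ⊕ Fin k := Sum.inl (n : Fin k)
private def Bv (n : ℕ) : Fin k ⊕ Fin k := Sum.inr (n : Fin k)
private def sE (n : ℕ) : Sym2 (Fin k ⊕ Fin k) := s(Av k n, Bv k n)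
private def tE (n : ℕ) : Sym2 (Fin k ⊕ Fin k) := s(Av k n, Av k (n+1))
private def cc : Fin k ⊕ Fin k → ℕ := Sum.elim Fin.val Fin.val

private lemma sE_inj {m n : ℕ} (hm : m < k) (hn : n < k) (h : sE k m = sE k n) : m = n := by
  simp only [sE, Av, Bv, Sym2.eq_iff, Sum.inl.injEq, Sum.inr.injEq, Fin.ext_iff,
    Fin.val_cast_of_lt hm, Fin.val_cast_of_lt hn] at h
  rcases h with ⟨h1, _⟩ | ⟨h1, _⟩ <;> simp_all

private lemma tE_inj {m n : ℕ} (hm : m + 1 < k) (hn : n + 1 < k) (h : tE k m = tE k n) :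
    m = n := by
  simp only [tE, Av, Sym2.eq_iff, Sum.inl.injEq, Fin.ext_iff,
    Fin.val_cast_of_lt hm, Fin.val_cast_of_lt hn,
    Fin.val_cast_of_lt (Nat.lt_of_succ_lt hm), Fin.val_cast_of_lt (Nat.lt_of_succ_lt hn)] at h
  omega

private lemma sE_ne_tE {m n : ℕ} : sE k m ≠ tE k n := by
  simp [sE, tE, Av, Bv, Sym2.eq_iff]

private lemma adj_pendant {n : ℕ} (hn : n < k) : (Gk k).Adj (Av k n) (Bv k n) := by
  rw [Gk, SimpleGraph.fromEdgeSet_adj]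
  exact ⟨Or.inl ⟨(n : Fin k), rfl⟩, by simp [Av, Bv]⟩

private lemma adj_spine {n : ℕ} (hn : n + 1 < k) : (Gk k).Adj (Av k n) (Av k (n+1)) := by
  rw [Gk, SimpleGraph.fromEdgeSet_adj]
  refine ⟨Or.inr ⟨(n : Fin k), ((n+1 : ℕ) : Fin k), ?_, rfl⟩, ?_⟩
  · rw [Fin.val_cast_of_lt hn, Fin.val_cast_of_lt (Nat.lt_of_succ_lt hn)]
  · intro h
    rw [Av, Av, Sum.inl.injEq] at h
    have := congrArg Fin.val h
    rw [Fin.val_cast_of_lt (Nat.lt_of_succ_lt hn), Fin.val_cast_of_lt hn] at this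
    omega

private lemma cast_ne {m n : ℕ} (hm : m < k) (hn : n < k) (h : m ≠ n) :
    (m : Fin k) ≠ (n : Fin k) := by
  intro he
  have := congrArg Fin.val he
  rw [Fin.val_cast_of_lt hm, Fin.val_cast_of_lt hn] at this
  exact h this

private lemma adj_cases {u v : Fin k ⊕ Fin k} (h : (Gk k).Adj u v) :
    cc k u = cc k v ∨ ∃ n, n + 1 < k ∧ s(u, v) = tE k n := by
  rw [Gk, SimpleGraph.fromEdgeSet_adj] at h
  rcases h.1 with ⟨i, he⟩ | ⟨i, j, hj, he⟩
  · left
    rw [Sym2.eq_iff] at he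
    rcases he with ⟨rfl, rfl⟩ | ⟨rfl, rfl⟩ <;> simp [cc]
  · right
    have hjk := j.isLt
    refine ⟨i.val, by omega, ?_⟩
    have h1 : ((i.val : ℕ) : Fin k) = i := Fin.cast_val_eq_self i
    have h2 : ((i.val + 1 : ℕ) : Fin k) = j := by
      apply Fin.ext
      rw [Fin.val_cast_of_lt (by omega : i.val + 1 < k)]
      omega
    rw [he, tE, Av, Av, h1, h2]

private lemma demand_ne {u v : Fin k ⊕ Fin k} (h : (Hk k).Adj u v) : cc k u ≠ cc k v := by
  rw [Hk, SimpleGraph.fromEdgeSet_adj] at h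
  rcases h.1 with ⟨i, j, hj, he⟩ | ⟨i, j, hj, he⟩ <;>
    · rw [Sym2.eq_iff] at he
      rcases he with ⟨rfl, rfl⟩ | ⟨rfl, rfl⟩ <;> simp [cc] <;> omega

private lemma walk_spine {u v : Fin k ⊕ Fin k} (w : (Gk k).Walk u v) (h : cc k u ≠ cc k v) :
    ∃ n, n + 1 < k ∧ tE k n ∈ w.edges := by
  induction w with
  | nil => exact absurd rfl h
  | @cons u x v hadj p ih =>
    rcases adj_cases k hadj with hc | ⟨n, hn, he⟩
    · obtain ⟨n, hn, hmem⟩ := ih (hc ▸ h)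
      exact ⟨n, hn, List.mem_cons_of_mem _ hmem⟩
    · exact ⟨n, hn, by rw [SimpleGraph.Walk.edges_cons, ← he]; exact List.mem_cons_self⟩

private def walkT {n : ℕ} (hn : n + 1 < k) : (Gk k).Walk (Bv k n) (Bv k (n+1)) :=
  .cons (adj_pendant k (Nat.lt_of_succ_lt hn)).symm
    (.cons (adj_spine k hn) (.cons (adj_pendant k hn) .nil))

private def walkQ {n : ℕ} (hn : n + 2 < k) : (Gk k).Walk (Bv k n) (Av k (n+2)) :=
  .cons (adj_pendant k (by omega)).symm
    (.cons (adj_spine k (by omega)) (.cons (adj_spine k hn) .nil))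

private lemma walkT_isPath {n : ℕ} (hn : n + 1 < k) : (walkT k hn).IsPath := by
  have h1 := cast_ne k (Nat.lt_of_succ_lt hn) hn (by omega : n ≠ n + 1)
  rw [SimpleGraph.Walk.isPath_def]
  unfold walkT
  simp only [SimpleGraph.Walk.support_cons, SimpleGraph.Walk.support_nil]
  simp only [walkT, SimpleGraph.Walk.support_cons, SimpleGraph.Walk.support_nil,
    List.nodup_cons, List.mem_cons, List.not_mem_nil, or_false, List.mem_singleton,
    List.nodup_nil, and_true, Av, Bv, not_or, Sum.inl.injEq, Sum.inr.injEq, reduceCtorEq,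
    not_false_eq_true, true_and]
  exact ⟨h1, h1⟩

private lemma walkQ_isPath {n : ℕ} (hn : n + 2 < k) : (walkQ k hn).IsPath := by
  have h1 := cast_ne k (by omega) (by omega) (by omega : n ≠ n + 1)
  have h2 := cast_ne k (by omega) hn (by omega : n ≠ n + 2)
  have h3 := cast_ne k (by omega) hn (by omega : n + 1 ≠ n + 2)
  rw [SimpleGraph.Walk.isPath_def]
  unfold walkQ
  simp only [SimpleGraph.Walk.support_cons, SimpleGraph.Walk.support_nil]
  simp only [walkQ, SimpleGraph.Walk.support_cons, SimpleGraph.Walk.support_nil,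
    List.nodup_cons, List.mem_cons, List.not_mem_nil, or_false, List.mem_singleton,
    List.nodup_nil, and_true, Av, Bv, not_or, Sum.inl.injEq, Sum.inr.injEq, reduceCtorEq,
    not_false_eq_true, true_and]
  exact ⟨⟨h1, h2⟩, h3⟩

private lemma demandT {n : ℕ} (hn : n + 1 < k) : (Hk k).Adj (Bv k n) (Bv k (n+1)) := by
  rw [Hk, SimpleGraph.fromEdgeSet_adj]
  refine ⟨Or.inl ⟨(n : Fin k), ((n+1 : ℕ) : Fin k), ?_, rfl⟩, ?_⟩
  · rw [Fin.val_cast_of_lt hn, Fin.val_cast_of_lt (Nat.lt_of_succ_lt hn)]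
  · exact fun h => cast_ne k (Nat.lt_of_succ_lt hn) hn (by omega)
      (Sum.inr.injEq _ _ ▸ (by rwa [Bv, Bv, Sum.inr.injEq] at h))

private lemma demandQ {n : ℕ} (hn : n + 2 < k) : (Hk k).Adj (Bv k n) (Av k (n+2)) := by
  rw [Hk, SimpleGraph.fromEdgeSet_adj]
  refine ⟨Or.inr ⟨(n : Fin k), ((n+2 : ℕ) : Fin k), ?_, rfl⟩, by simp [Av, Bv]⟩
  rw [Fin.val_cast_of_lt hn, Fin.val_cast_of_lt (by omega : n < k)]

private def PT {n : ℕ} (hn : n + 1 < k) : FlowPath (Gk k) (Hk k) :=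
  ⟨_, _, demandT k hn, walkT k hn, walkT_isPath k hn⟩

private def PQ {n : ℕ} (hn : n + 2 < k) : FlowPath (Gk k) (Hk k) :=
  ⟨_, _, demandQ k hn, walkQ k hn, walkQ_isPath k hn⟩

private lemma hitT {M : Set (Sym2 (Fin k ⊕ Fin k))} (hM : IsMulticut (Gk k) (Hk k) M)
    {n : ℕ} (hn : n + 1 < k) : sE k n ∈ M ∨ tE k n ∈ M ∨ sE k (n+1) ∈ M := by
  obtain ⟨e, heM, hee⟩ := hM.2 (PT k hn)
  simp only [FlowPath.edges, Set.mem_setOf_eq, PT, walkT, SimpleGraph.Walk.edges_cons,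
    SimpleGraph.Walk.edges_nil, List.mem_cons, List.not_mem_nil, or_false] at hee
  rcases hee with rfl | rfl | rfl
  · left; rwa [sE, Sym2.eq_swap]
  · right; left; rwa [tE]
  · right; right; rwa [sE]

private lemma hitQ {M : Set (Sym2 (Fin k ⊕ Fin k))} (hM : IsMulticut (Gk k) (Hk k) M)
    {n : ℕ} (hn : n + 2 < k) : sE k n ∈ M ∨ tE k n ∈ M ∨ tE k (n+1) ∈ M := by
  obtain ⟨e, heM, hee⟩ := hM.2 (PQ k hn)
  simp only [FlowPath.edges, Set.mem_setOf_eq, PQ, walkQ, SimpleGraph.Walk.edges_cons,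
    SimpleGraph.Walk.edges_nil, List.mem_cons, List.not_mem_nil, or_false] at hee
  rcases hee with rfl | rfl | rfl
  · left; rwa [sE, Sym2.eq_swap]
  · right; left; rwa [tE]
  · right; right; rwa [tE]

end MulticutAux

/-- For every `k ≥ 3` the minimum cardinality of a multicut for
`(G_k, H_k)` (unit capacities) is exactly `k - 1`. -/
theorem min_multicut_Gk (k : ℕ) (hk : 3 ≤ k) :
    IsLeast {n : ℕ | ∃ M : Set (Sym2 (Fin k ⊕ Fin k)),
      IsMulticut (Gk k) (Hk k) M ∧ n = M.ncard} (k - 1) := by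
  haveI : NeZero k := ⟨by omega⟩
  have htE_injOn : Set.InjOn (tE k) ↑(Finset.range (k-1)) := by
    intro m hm n hn h
    simp only [Finset.coe_range, Set.mem_Iio] at hm hn
    exact tE_inj k (by omega) (by omega) h
  constructor
  · refine ⟨↑((Finset.range (k-1)).image (tE k)), ⟨?_, ?_⟩, ?_⟩
    · intro e he
      simp only [Finset.coe_image, Set.mem_image, Finset.coe_range, Set.mem_Iio] at he
      obtain ⟨n, hn, rfl⟩ := he
      rw [tE]
      exact (Gk k).mem_edgeSet.mpr (adj_spine k (show n + 1 < k by omega))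
    · intro P
      obtain ⟨n, hn, hmem⟩ := walk_spine k P.walk (demand_ne k P.demand)
      refine ⟨tE k n, ?_, hmem⟩
      simp only [Finset.coe_image, Set.mem_image, Finset.coe_range, Set.mem_Iio]
      exact ⟨n, by omega, rfl⟩
    · rw [Set.ncard_coe_finset, Finset.card_image_of_injOn htE_injOn, Finset.card_range]
  · rintro m ⟨M, hM, rfl⟩
    set g : ℕ → Sym2 (Fin k ⊕ Fin k) := fun n =>
      if sE k n ∈ M then sE k n else if tE k n ∈ M then tE k n
      else if n = k - 2 then sE k (k-1) else tE k (n+1) with hg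
    have hshape : ∀ n, n < k - 1 →
        (g n = sE k n ∧ sE k n ∈ M) ∨
        (g n = tE k n ∧ tE k n ∈ M ∧ sE k n ∉ M) ∨
        (n = k - 2 ∧ g n = sE k (k-1) ∧ sE k (k-1) ∈ M ∧ sE k n ∉ M ∧ tE k n ∉ M) ∨
        (n < k - 2 ∧ g n = tE k (n+1) ∧ tE k (n+1) ∈ M ∧ sE k n ∉ M ∧ tE k n ∉ M ∧
          sE k (n+1) ∈ M) := by
      intro n hn
      by_cases h1 : sE k n ∈ M
      · left; exact ⟨by simp [hg, h1], h1⟩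
      by_cases h2 : tE k n ∈ M
      · right; left; exact ⟨by simp [hg, h1, h2], h2, h1⟩
      have hT := hitT k hM (show n + 1 < k by omega)
      have hs1 : sE k (n+1) ∈ M := by tauto
      by_cases h3 : n = k - 2
      · right; right; left
        refine ⟨h3, by simp only [hg]; rw [if_neg h1, if_neg h2, if_pos h3], ?_, h1, h2⟩
        have he : n + 1 = k - 1 := by omega
        rwa [← he]
      · right; right; right
        have hQ := hitQ k hM (show n + 2 < k by omega)
        have ht1 : tE k (n+1) ∈ M := by tauto
        exact ⟨by omega, by simp [hg, h1, h2, h3], ht1, h1, h2, hs1⟩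
    have hginj : Set.InjOn g ↑(Finset.range (k-1)) := by
      intro m hm n hn hmn
      simp only [Finset.coe_range, Set.mem_Iio] at hm hn
      rcases hshape m hm with ⟨e1, _⟩ | ⟨e1, _, hsm⟩ | ⟨hm2, e1, _, hsm, htm⟩ |
          ⟨hm2, e1, _, hsm, htm, hsm1⟩ <;>
        rcases hshape n hn with ⟨f1, hsn'⟩ | ⟨f1, _, hsn⟩ | ⟨hn2, f1, _, hsn, htn⟩ |
          ⟨hn2, f1, _, hsn, htn, hsn1⟩ <;>
        rw [e1, f1] at hmn
      · exact sE_inj k (by omega) (by omega) hmn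
      · exact absurd hmn (sE_ne_tE k)
      · have := sE_inj k (by omega) (by omega) hmn; omega
      · exact absurd hmn (sE_ne_tE k)
      · exact absurd hmn.symm (sE_ne_tE k)
      · exact tE_inj k (by omega) (by omega) hmn
      · exact absurd hmn.symm (sE_ne_tE k)
      · have hmn1 := tE_inj k (by omega) (by omega) hmn
        subst hmn1
        exact absurd hsn1 hsm
      · have := sE_inj k (by omega) (by omega) hmn; omega
      · exact absurd hmn (sE_ne_tE k)
      · omega
      · exact absurd hmn (sE_ne_tE k)
      · exact absurd hmn.symm (sE_ne_tE k)
      · have hmn1 := tE_inj k (by omega) (by omega) hmn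
        subst hmn1
        exact absurd hsm1 hsn
      · exact absurd hmn.symm (sE_ne_tE k)
      · have := tE_inj k (by omega) (by omega) hmn; omega
    have hsub : ↑((Finset.range (k-1)).image g) ⊆ M := by
      intro e he
      simp only [Finset.coe_image, Set.mem_image, Finset.coe_range, Set.mem_Iio] at he
      obtain ⟨n, hn, rfl⟩ := he
      rcases hshape n hn with ⟨e1, h⟩ | ⟨e1, h, _⟩ | ⟨_, e1, h, _⟩ | ⟨_, e1, h, _⟩ <;>
        rw [e1] <;> exact h
    calc k - 1 = ((Finset.range (k-1)).image g).card := by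
          rw [Finset.card_image_of_injOn hginj, Finset.card_range]
      _ = (↑((Finset.range (k-1)).image g) : Set _).ncard := (Set.ncard_coe_finset _).symm
      _ ≤ M.ncard := Set.ncard_le_ncard hsub (Set.toFinite M)
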